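/- arXiv:2510.22862 — 6 statements merged into one kernel-verified Lean document; each statement's English description precedes it below -/
import Mathlib

section
/- Let G = (V,E) be a simple oriented graph on a finite vertex type, and let (a,b) ∈ E. Let G' be the graph obtained from G by flipping the edge (a,b), i.e. replacing (a,b) with (b,a). Then the number of unordered triples of vertices forming a directed 3-cycle in G' equals the corresponding number for G, minus the number of vertices c with (b,c) ∈ E and (c,a) ∈ E, plus the number of vertices c with (a,c) ∈ E and (c,b) ∈ E. -/
/-- The graph obtained by flipping the edge `(a,b)`, i.e. replacing `(a,b)` by `(b,a)`. -/
def Flip {V : Type*} (E : V → V → Prop) (a b : V) : V → V → Prop :=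
  fun i j => (i = b ∧ j = a) ∨ (E i j ∧ ¬ (i = a ∧ j = b))

/-- The number of directed 3-cycles of a graph: the number of unordered 3-element
subsets of `V` whose elements form a directed 3-cycle. -/
noncomputable def NumCycles3 (V : Type*) (E : V → V → Prop) : ℕ :=
  Nat.card {s : Set V // s.ncard = 3 ∧
    ∃ a b c, s = ({a, b, c} : Set V) ∧ E a b ∧ E b c ∧ E c a}

/-- The set of 3-cycles of a graph. -/
def CycSet {V : Type*} (F : V → V → Prop) : Set (Set V) :=
  {s | s.ncard = 3 ∧ ∃ x y z, s = ({x, y, z} : Set V) ∧ F x y ∧ F y z ∧ F z x}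

lemma numCycles3_eq_ncard {V : Type*} (F : V → V → Prop) :
    NumCycles3 V F = (CycSet F).ncard := by
  rw [← Nat.card_coe_set_eq]
  rfl

/-- Flipping an edge `(a,b)` of a simple oriented graph changes the number
of directed 3-cycles by subtracting the number of vertices `c` with `(b,c), (c,a) ∈ E`
and adding the number of vertices `c` with `(a,c), (c,b) ∈ E`. -/
theorem stmt2 {V : Type*} [Fintype V] (E : V → V → Prop)
    (hsimple : ∀ i j, E i j → i ≠ j) (horiented : ∀ i j, E i j → ¬ E j i)
    (a b : V) (hab : E a b) :
    (NumCycles3 V (Flip E a b) : ℤ) =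
      (NumCycles3 V E : ℤ)
        - (Nat.card {c : V // E b c ∧ E c a} : ℤ)
        + (Nat.card {c : V // E a c ∧ E c b} : ℤ) := by
  classical
  have hne : a ≠ b := hsimple a b hab
  set Old : Set (Set V) := {s | ∃ c, s = ({a, b, c} : Set V) ∧ E b c ∧ E c a} with hOldDef
  set New : Set (Set V) := {s | ∃ c, s = ({a, b, c} : Set V) ∧ E a c ∧ E c b} with hNewDef
  -- Old is a subset of the cycles of E
  have hOldSub : Old ⊆ CycSet E := by
    rintro s ⟨c, rfl, hbc, hca⟩
    refine ⟨?_, a, b, c, rfl, hab, hbc, hca⟩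
    rw [Set.ncard_eq_three]
    exact ⟨a, b, c, hne, (hsimple c a hca).symm, hsimple b c hbc, rfl⟩
  -- New is disjoint from the cycles of E
  have hNewDisj : ∀ s ∈ New, s ∉ CycSet E := by
    rintro s ⟨c, rfl, hac, hcb⟩ ⟨-, x, y, z, hxyz, hxy, hyz, hzx⟩
    have hnb : ∀ w ∈ ({a, b, c} : Set V), ¬ E b w := by
      intro w hw hbw
      simp only [Set.mem_insert_iff, Set.mem_singleton_iff] at hw
      rcases hw with rfl | rfl | rfl
      · exact horiented _ _ hab hbw
      · exact hsimple _ _ hbw rfl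
      · exact horiented _ _ hcb hbw
    have hbmem : b ∈ ({x, y, z} : Set V) := by rw [← hxyz]; simp
    simp only [Set.mem_insert_iff, Set.mem_singleton_iff] at hbmem
    rcases hbmem with rfl | rfl | rfl
    · exact hnb y (by rw [hxyz]; simp) hxy
    · exact hnb z (by rw [hxyz]; simp) hyz
    · exact hnb x (by rw [hxyz]; simp) hzx
  -- the main set identity
  have hMain : CycSet (Flip E a b) = (CycSet E \ Old) ∪ New := by
    ext s
    constructor
    · rintro ⟨hn, x, y, z, rfl, hxy, hyz, hzx⟩
      simp only [Flip] at hxy hyz hzx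
      rcases hxy with ⟨rfl, rfl⟩ | ⟨hxy, hnxy⟩
      · -- x = b, y = a
        rcases hyz with ⟨h, -⟩ | ⟨hyz, -⟩
        · first
          | exact absurd h hne | exact absurd h hne.symm
          | exact absurd h.symm hne | exact absurd h.symm hne.symm
        rcases hzx with ⟨-, h⟩ | ⟨hzx, -⟩
        · first
          | exact absurd h hne | exact absurd h hne.symm
          | exact absurd h.symm hne | exact absurd h.symm hne.symm
        right
        exact ⟨z, by ext t; simp; tauto, hyz, hzx⟩
      rcases hyz with ⟨rfl, rfl⟩ | ⟨hyz, hnyz⟩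
      · -- y = b, z = a
        rcases hzx with ⟨h, -⟩ | ⟨hzx, -⟩
        · first
          | exact absurd h hne | exact absurd h hne.symm
          | exact absurd h.symm hne | exact absurd h.symm hne.symm
        right
        exact ⟨x, by ext t; simp; tauto, hzx, hxy⟩
      rcases hzx with ⟨rfl, rfl⟩ | ⟨hzx, hnzx⟩
      · -- z = b, x = a
        right
        exact ⟨y, by ext t; simp; tauto, hxy, hyz⟩
      · -- all three are E-edges distinct from (a,b)
        left
        refine ⟨⟨hn, x, y, z, rfl, hxy, hyz, hzx⟩, ?_⟩
        rintro ⟨c, hs, hbc, hca⟩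
        have hsucc : ∀ w, E a w → w ∈ ({x, y, z} : Set V) → w = b := by
          intro w haw hw
          rw [hs] at hw
          simp only [Set.mem_insert_iff, Set.mem_singleton_iff] at hw
          rcases hw with rfl | rfl | rfl
          · exact absurd rfl (hsimple _ _ haw)
          · rfl
          · exact absurd haw (horiented _ _ hca)
        have ha : a ∈ ({x, y, z} : Set V) := by rw [hs]; simp
        simp only [Set.mem_insert_iff, Set.mem_singleton_iff] at ha
        rcases ha with rfl | rfl | rfl
        · exact hnxy ⟨rfl, hsucc y hxy (by simp)⟩
        · exact hnyz ⟨rfl, hsucc z hyz (by simp)⟩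
        · exact hnzx ⟨rfl, hsucc x hzx (by simp)⟩
    · rintro (⟨⟨hn, x, y, z, rfl, hxy, hyz, hzx⟩, hOld⟩ | ⟨c, rfl, hac, hcb⟩)
      · have h1 : ¬(x = a ∧ y = b) := by
          rintro ⟨rfl, rfl⟩; exact hOld ⟨z, rfl, hyz, hzx⟩
        have h2 : ¬(y = a ∧ z = b) := by
          rintro ⟨rfl, rfl⟩; exact hOld ⟨x, by ext t; simp; tauto, hzx, hxy⟩
        have h3 : ¬(z = a ∧ x = b) := by
          rintro ⟨rfl, rfl⟩; exact hOld ⟨y, by ext t; simp; tauto, hxy, hyz⟩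
        exact ⟨hn, x, y, z, rfl, Or.inr ⟨hxy, h1⟩, Or.inr ⟨hyz, h2⟩, Or.inr ⟨hzx, h3⟩⟩
      · have hcna : c ≠ a := (hsimple a c hac).symm
        have hcnb : c ≠ b := hsimple c b hcb
        refine ⟨?_, b, a, c, by ext t; simp; tauto,
          Or.inl ⟨rfl, rfl⟩,
          Or.inr ⟨hac, fun h => hcnb h.2⟩,
          Or.inr ⟨hcb, fun h => hcna h.1⟩⟩
        rw [Set.ncard_eq_three]
        exact ⟨a, b, c, hne, hcna.symm, hcnb.symm, rfl⟩
  -- cardinalities of Old and New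
  have hOldCard : Old.ncard = Nat.card {c : V // E b c ∧ E c a} := by
    have himg : Old = (fun c => ({a, b, c} : Set V)) '' {c | E b c ∧ E c a} := by
      ext s
      constructor
      · rintro ⟨c, rfl, h1, h2⟩; exact ⟨c, ⟨h1, h2⟩, rfl⟩
      · rintro ⟨c, ⟨h1, h2⟩, rfl⟩; exact ⟨c, rfl, h1, h2⟩
    have hinj : Set.InjOn (fun c => ({a, b, c} : Set V)) {c | E b c ∧ E c a} := by
      rintro c1 ⟨hb1, ha1⟩ c2 ⟨hb2, ha2⟩ heq
      have heq' : ({a, b, c1} : Set V) = ({a, b, c2} : Set V) := heq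
      have hm : c1 ∈ ({a, b, c2} : Set V) := by
        rw [← heq']; simp
      simp only [Set.mem_insert_iff, Set.mem_singleton_iff] at hm
      rcases hm with rfl | rfl | h
      · exact absurd rfl (hsimple _ _ ha1)
      · exact absurd rfl (hsimple _ _ hb1).symm
      · exact h
    rw [himg, Set.ncard_image_of_injOn hinj]
    exact (Nat.card_coe_set_eq _).symm
  have hNewCard : New.ncard = Nat.card {c : V // E a c ∧ E c b} := by
    have himg : New = (fun c => ({a, b, c} : Set V)) '' {c | E a c ∧ E c b} := by
      ext s
      constructor
      · rintro ⟨c, rfl, h1, h2⟩; exact ⟨c, ⟨h1, h2⟩, rfl⟩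
      · rintro ⟨c, ⟨h1, h2⟩, rfl⟩; exact ⟨c, rfl, h1, h2⟩
    have hinj : Set.InjOn (fun c => ({a, b, c} : Set V)) {c | E a c ∧ E c b} := by
      rintro c1 ⟨ha1, hb1⟩ c2 ⟨ha2, hb2⟩ heq
      have heq' : ({a, b, c1} : Set V) = ({a, b, c2} : Set V) := heq
      have hm : c1 ∈ ({a, b, c2} : Set V) := by
        rw [← heq']; simp
      simp only [Set.mem_insert_iff, Set.mem_singleton_iff] at hm
      rcases hm with rfl | rfl | h
      · exact absurd rfl (hsimple _ _ ha1).symm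
      · exact absurd rfl (hsimple _ _ hb1)
      · exact h
    rw [himg, Set.ncard_image_of_injOn hinj]
    exact (Nat.card_coe_set_eq _).symm
  -- counting
  have hdisj : Disjoint (CycSet E \ Old) New := by
    rw [Set.disjoint_left]
    intro s hsl hsr
    exact hNewDisj s hsr hsl.1
  have hF : (CycSet (Flip E a b)).ncard = (CycSet E \ Old).ncard + New.ncard := by
    rw [hMain, Set.ncard_union_eq hdisj (Set.toFinite _) (Set.toFinite _)]
  have hE : (CycSet E \ Old).ncard + Old.ncard = (CycSet E).ncard :=
    Set.ncard_diff_add_ncard_of_subset hOldSub (Set.toFinite _)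
  rw [numCycles3_eq_ncard, numCycles3_eq_ncard, ← hOldCard, ← hNewCard, hF, ← hE]
  push_cast
  ring
end

section
/- Let G = (V,E) be a simple oriented graph on a finite vertex type and let (a,b) ∈ E. If the number of vertices c with (a,c) ∈ E and (c,b) ∈ E is strictly greater than the number of vertices c with (b,c) ∈ E and (c,a) ∈ E, then flipping the edge (a,b) strictly increases the number of unordered triples of vertices forming a directed 3-cycle. -/
def Cyc {V : Type*} (E : V → V → Prop) (s : Set V) : Prop :=
  s.ncard = 3 ∧ ∃ a b c, s = ({a, b, c} : Set V) ∧ E a b ∧ E b c ∧ E c a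

lemma card_pairs {V : Type*} [Fintype V] (E : V → V → Prop)
    (hsimple : ∀ i j, E i j → i ≠ j) (horiented : ∀ i j, E i j → ¬ E j i)
    (a b : V) (hab : E a b) :
    Nat.card {x : {s : Set V // Cyc E s} // a ∈ x.val ∧ b ∈ x.val}
      = Nat.card {c : V // E b c ∧ E c a} := by
  have hne : a ≠ b := hsimple a b hab
  refine (Nat.card_eq_of_bijective
    (fun c => (⟨⟨({a, b, c.1} : Set V), ?_, a, b, c.1, rfl, hab, c.2.1, c.2.2⟩,
      by simp, by simp⟩ : {x : {s : Set V // Cyc E s} // a ∈ x.val ∧ b ∈ x.val}))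
    ⟨?_, ?_⟩).symm
  · -- ncard = 3
    rw [Set.ncard_eq_three]
    exact ⟨a, b, c.1, hne, (hsimple c.1 a c.2.2).symm, hsimple b c.1 c.2.1, rfl⟩
  · -- injective
    rintro ⟨c, hbc, hca⟩ ⟨c', hbc', hca'⟩ hcc
    have hs : ({a, b, c} : Set V) = {a, b, c'} := congrArg (fun x => x.val.val) hcc
    have : c' ∈ ({a, b, c} : Set V) := by rw [hs]; simp
    rcases this with h1 | h1 | h1
    · exact absurd h1 (hsimple c' a hca')
    · exact absurd h1 ((hsimple b c' hbc').symm)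
    · simpa using h1.symm
  · -- surjective
    rintro ⟨⟨s, h3, p, q, r, hs, hpq, hqr, hrp⟩, ha, hb⟩
    have ha' : a ∈ ({p, q, r} : Set V) := hs ▸ ha
    have hb' : b ∈ ({p, q, r} : Set V) := hs ▸ hb
    simp only [Set.mem_insert_iff, Set.mem_singleton_iff] at ha' hb'
    have key : ∃ c, E b c ∧ E c a ∧ s = ({a, b, c} : Set V) := by
      rcases ha' with rfl | rfl | rfl <;> rcases hb' with rfl | rfl | rfl
      · exact absurd rfl hne
      · exact ⟨r, hqr, hrp, by rw [hs]⟩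
      · exact absurd hrp (horiented _ _ hab)
      · exact absurd hpq (horiented _ _ hab)
      · exact absurd rfl hne
      · refine ⟨p, hrp, hpq, ?_⟩
        rw [hs]; ext x; simp; tauto
      · refine ⟨q, hpq, hqr, ?_⟩
        rw [hs]; ext x; simp; tauto
      · exact absurd hqr (horiented _ _ hab)
      · exact absurd rfl hne
    obtain ⟨c, hbc, hca, hsc⟩ := key
    refine ⟨⟨c, hbc, hca⟩, ?_⟩
    apply Subtype.ext; apply Subtype.ext
    exact hsc.symm

lemma flip_simple {V : Type*} (E : V → V → Prop)
    (hsimple : ∀ i j, E i j → i ≠ j) (a b : V) (hab : E a b) :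
    ∀ i j, Flip E a b i j → i ≠ j := by
  rintro i j (⟨h1, h2⟩ | ⟨h, -⟩)
  · subst h1; subst h2; exact (hsimple _ _ hab).symm
  · exact hsimple i j h

lemma flip_oriented {V : Type*} (E : V → V → Prop)
    (hsimple : ∀ i j, E i j → i ≠ j) (horiented : ∀ i j, E i j → ¬ E j i)
    (a b : V) (hab : E a b) :
    ∀ i j, Flip E a b i j → ¬ Flip E a b j i := by
  rintro i j (⟨h1, h2⟩ | ⟨h, hn⟩) (⟨h1', h2'⟩ | ⟨h', hn'⟩)
  · exact hsimple a b hab (h2'.symm.trans h1)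
  · subst h1; subst h2; exact hn' ⟨rfl, rfl⟩
  · exact hn ⟨h2', h1'⟩
  · exact horiented i j h h'

lemma flip_ab {V : Type*} (E : V → V → Prop) (a b : V) (hne : a ≠ b) :
    Flip E a b b a := Or.inl ⟨rfl, rfl⟩

lemma cyc_flip_iff {V : Type*} (E : V → V → Prop) (a b : V) (s : Set V)
    (h : ¬ (a ∈ s ∧ b ∈ s)) : Cyc E s ↔ Cyc (Flip E a b) s := by
  constructor
  · rintro ⟨h3, p, q, r, hs, hpq, hqr, hrp⟩
    refine ⟨h3, p, q, r, hs, ?_, ?_, ?_⟩ <;> refine Or.inr ⟨by assumption, ?_⟩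
    · rintro ⟨rfl, rfl⟩; exact h ⟨hs ▸ (by simp), hs ▸ (by simp)⟩
    · rintro ⟨rfl, rfl⟩; exact h ⟨hs ▸ (by simp), hs ▸ (by simp)⟩
    · rintro ⟨rfl, rfl⟩; exact h ⟨hs ▸ (by simp), hs ▸ (by simp)⟩
  · rintro ⟨h3, p, q, r, hs, hpq, hqr, hrp⟩
    refine ⟨h3, p, q, r, hs, ?_, ?_, ?_⟩
    · rcases hpq with ⟨rfl, rfl⟩ | ⟨h', -⟩
      · exact absurd ⟨hs ▸ (by simp), hs ▸ (by simp)⟩ h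
      · exact h'
    · rcases hqr with ⟨rfl, rfl⟩ | ⟨h', -⟩
      · exact absurd ⟨hs ▸ (by simp), hs ▸ (by simp)⟩ h
      · exact h'
    · rcases hrp with ⟨rfl, rfl⟩ | ⟨h', -⟩
      · exact absurd ⟨hs ▸ (by simp), hs ▸ (by simp)⟩ h
      · exact h'

/-- If, for an edge `(a,b)` of a simple oriented graph, the number of
vertices `c` with `(a,c), (c,b) ∈ E` strictly exceeds the number of vertices `c` with
`(b,c), (c,a) ∈ E`, then flipping `(a,b)` strictly increases the number of directed
3-cycles. -/
theorem stmt4 {V : Type*} [Fintype V] (E : V → V → Prop)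
    (hsimple : ∀ i j, E i j → i ≠ j) (horiented : ∀ i j, E i j → ¬ E j i)
    (a b : V) (hab : E a b)
    (h : Nat.card {c : V // E b c ∧ E c a} < Nat.card {c : V // E a c ∧ E c b}) :
    NumCycles3 V E < NumCycles3 V (Flip E a b) := by
  classical
  have hne : a ≠ b := hsimple a b hab
  have F := Flip E a b
  -- decomposition for a general graph
  have decomp : ∀ G : V → V → Prop, NumCycles3 V G =
      Nat.card {x : {s : Set V // Cyc G s} // a ∈ x.val ∧ b ∈ x.val} +
      Nat.card {x : {s : Set V // Cyc G s} // ¬ (a ∈ x.val ∧ b ∈ x.val)} := by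
    intro G
    have : NumCycles3 V G = Nat.card {s : Set V // Cyc G s} := rfl
    rw [this, ← Nat.card_sum]
    exact Nat.card_congr (Equiv.sumCompl (fun x : {s : Set V // Cyc G s} =>
      a ∈ x.val ∧ b ∈ x.val)).symm
  rw [decomp E, decomp (Flip E a b)]
  have e1 : Nat.card {x : {s : Set V // Cyc E s} // a ∈ x.val ∧ b ∈ x.val}
      = Nat.card {c : V // E b c ∧ E c a} := card_pairs E hsimple horiented a b hab
  have e2 : Nat.card {x : {s : Set V // Cyc (Flip E a b) s} // a ∈ x.val ∧ b ∈ x.val}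
      = Nat.card {c : V // E a c ∧ E c b} := by
    have := card_pairs (Flip E a b) (flip_simple E hsimple a b hab)
      (flip_oriented E hsimple horiented a b hab) b a (flip_ab E a b hne)
    refine ((Nat.card_congr (Equiv.subtypeEquivRight (fun x => and_comm))).trans
      this).trans (Nat.card_congr (Equiv.subtypeEquivRight (fun c => ?_)))
    constructor
    · rintro ⟨hac, hcb⟩
      rcases hac with ⟨h1, -⟩ | ⟨h1, -⟩
      · exact absurd h1 hne
      · rcases hcb with ⟨-, h2⟩ | ⟨h2, -⟩
        · exact absurd h2.symm hne
        · exact ⟨h1, h2⟩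
    · rintro ⟨h1, h2⟩
      refine ⟨Or.inr ⟨h1, ?_⟩, Or.inr ⟨h2, ?_⟩⟩
      · rintro ⟨-, h3⟩; exact hsimple c b h2 h3
      · rintro ⟨h3, -⟩; exact (hsimple a c h1).symm h3
  have e3 : Nat.card {x : {s : Set V // Cyc E s} // ¬ (a ∈ x.val ∧ b ∈ x.val)}
      = Nat.card {x : {s : Set V // Cyc (Flip E a b) s} // ¬ (a ∈ x.val ∧ b ∈ x.val)} := by
    apply Nat.card_congr
    refine ⟨fun x => ⟨⟨x.1.1, (cyc_flip_iff E a b x.1.1 x.2).mp x.1.2⟩, x.2⟩,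
      fun x => ⟨⟨x.1.1, (cyc_flip_iff E a b x.1.1 x.2).mpr x.1.2⟩, x.2⟩, ?_, ?_⟩
    · intro x; rfl
    · intro x; rfl
  rw [e1, e2, e3]
  omega
end

section
/- There exists an FBD-graph with exactly 2046 vertices and exactly 16368 edges: a simple oriented graph on a vertex type of cardinality 2046 whose edge relation has exactly 16368 elements, which contains no directed 3-cycles, and in which every edge is blocked. -/
abbrev Dl : List (ZMod 2046) := [1, 2, 4, 8, 2032, 2033, 2035, 2039]

lemma Dl_ne_zero : ∀ d ∈ Dl, d ≠ 0 := by
  have h : Dl.all (fun d => decide (d ≠ 0)) = true := by decide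
  intro d hd
  exact of_decide_eq_true (List.all_eq_true.mp h _ hd)

lemma Dl_asymm : ∀ d ∈ Dl, -d ∉ Dl := by
  have h : Dl.all (fun d => !decide (-d ∈ Dl)) = true := by decide
  intro d hd
  have := List.all_eq_true.mp h _ hd
  simpa using this

lemma Dl_no_triple : ∀ d1 ∈ Dl, ∀ d2 ∈ Dl, ∀ d3 ∈ Dl, d1 + d2 + d3 ≠ 0 := by
  have h : Dl.all (fun d1 => Dl.all (fun d2 => Dl.all
      (fun d3 => decide (d1 + d2 + d3 ≠ 0)))) = true := by decide
  intro d1 h1 d2 h2 d3 h3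
  exact of_decide_eq_true
    (List.all_eq_true.mp (List.all_eq_true.mp (List.all_eq_true.mp h _ h1) _ h2) _ h3)

lemma Dl_blocked : ∀ d ∈ Dl, ∃ d' ∈ Dl, d - d' ∈ Dl := by
  have h : Dl.all (fun d => Dl.any (fun d' => decide (d - d' ∈ Dl))) = true := by decide
  intro d hd
  obtain ⟨d', hd', hm⟩ := List.any_eq_true.mp (List.all_eq_true.mp h _ hd)
  exact ⟨d', hd', of_decide_eq_true hm⟩

lemma Dl_nodup : Dl.Nodup := by decide

def edgeEquiv :
    {p : ZMod 2046 × ZMod 2046 // p.2 - p.1 ∈ Dl} ≃ ZMod 2046 × {d // d ∈ Dl} where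
  toFun p := (p.1.1, ⟨p.1.2 - p.1.1, p.2⟩)
  invFun q := ⟨(q.1, q.1 + q.2.1), by simp [q.2.2]⟩
  left_inv p := by ext <;> simp
  right_inv q := by ext <;> simp

/-- There exists an FBD-graph with exactly 2046 vertices and exactly 16368
edges: a simple oriented graph on a vertex type of cardinality 2046 whose edge relation
has exactly 16368 elements, with no directed 3-cycles, in which every edge is blocked. -/
theorem stmt7 :
    ∃ (V : Type) (_ : Fintype V) (E : V → V → Prop),
      Nat.card V = 2046 ∧
      Nat.card {p : V × V // E p.1 p.2} = 16368 ∧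
      (∀ i j, E i j → i ≠ j) ∧
      (∀ i j, E i j → ¬ E j i) ∧
      (∀ a b c, ¬ (E a b ∧ E b c ∧ E c a)) ∧
      (∀ a b, E a b → ∃ c, E a c ∧ E c b) := by
  refine ⟨ZMod 2046, inferInstance, fun i j => j - i ∈ Dl, ?_, ?_, ?_, ?_, ?_, ?_⟩
  · rw [Nat.card_eq_fintype_card, ZMod.card]
  · rw [Nat.card_congr edgeEquiv, Nat.card_prod]
    have h1 : Nat.card (ZMod 2046) = 2046 := by
      rw [Nat.card_eq_fintype_card, ZMod.card]
    have h2 : Nat.card {d // d ∈ Dl} = 8 := by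
      rw [Nat.card_eq_fintype_card,
        Fintype.card_congr (Equiv.subtypeEquivRight fun x => (List.mem_toFinset (l := Dl)).symm),
        Fintype.card_coe, List.toFinset_card_of_nodup Dl_nodup]
      rfl
    rw [h1, h2]
  · intro i j h hij
    exact Dl_ne_zero _ h (by rw [hij]; ring)
  · intro i j h h'
    apply Dl_asymm _ h
    have e : -(j - i) = i - j := by ring
    rw [e]; exact h'
  · rintro a b c ⟨h1, h2, h3⟩
    exact Dl_no_triple _ h1 _ h2 _ h3 (by ring)
  · intro a b h
    obtain ⟨d', hd', hdd⟩ := Dl_blocked _ h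
    refine ⟨b - d', ?_, ?_⟩
    · show b - d' - a ∈ Dl
      have e : b - d' - a = (b - a) - d' := by ring
      rw [e]; exact hdd
    · show b - (b - d') ∈ Dl
      have e : b - (b - d') = d' := by ring
      rw [e]; exact hd'
end

section
/- There is no complete FBD-graph: if G = (V,E) is a simple oriented graph on a finite vertex type with at least 2 vertices such that for all distinct vertices i, j exactly one of (i,j) ∈ E or (j,i) ∈ E holds (i.e. G is a tournament), and G has no directed 3-cycles, then G has an unblocked edge; in particular G is not an FBD-graph. -/
/-- There is no complete FBD-graph. If `G = (V,E)` is a simple oriented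
graph on a finite vertex type with at least 2 vertices which is a tournament (for all
distinct `i, j` exactly one of `(i,j) ∈ E`, `(j,i) ∈ E` holds) and has no directed
3-cycles, then `G` has an unblocked edge; in particular not every edge of `G` is
blocked, so `G` is not an FBD-graph. -/
theorem stmt10 {V : Type*} [Fintype V] (E : V → V → Prop)
    (hcard : 2 ≤ Nat.card V)
    (hsimple : ∀ i j, E i j → i ≠ j) (horiented : ∀ i j, E i j → ¬ E j i)
    (htournament : ∀ i j : V, i ≠ j → E i j ∨ E j i)
    (hnc : ∀ a b c, ¬ (E a b ∧ E b c ∧ E c a)) :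
    (∃ a b, E a b ∧ ¬ ∃ c, E a c ∧ E c b) ∧
    ¬ (∀ a b, E a b → ∃ c, E a c ∧ E c b) := by
  classical
  -- transitivity
  have htrans : ∀ a b c, E a b → E b c → E a c := by
    intro a b c hab hbc
    have hac : a ≠ c := by
      rintro rfl
      exact horiented a b hab hbc
    rcases htournament a c hac with h | h
    · exact h
    · exact absurd ⟨hab, hbc, h⟩ (hnc a b c)
  -- every nonempty finset has a "max" (beats all others in the set)
  have hmax : ∀ s : Finset V, s.Nonempty → ∃ m ∈ s, ∀ x ∈ s, x ≠ m → E m x := by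
    intro s
    induction s using Finset.induction_on with
    | empty => intro h; exact absurd h (by simp)
    | @insert a s ha ih =>
      intro _
      by_cases hs : s.Nonempty
      · obtain ⟨m, hm, hmb⟩ := ih hs
        have ham : a ≠ m := fun h => ha (h ▸ hm)
        rcases htournament a m ham with h | h
        · refine ⟨a, Finset.mem_insert_self _ _, ?_⟩
          intro x hx hxa
          rcases Finset.mem_insert.mp hx with rfl | hx
          · exact absurd rfl hxa
          · by_cases hxm : x = m
            · exact hxm ▸ h
            · exact htrans a m x h (hmb x hx hxm)
        · refine ⟨m, Finset.mem_insert_of_mem hm, ?_⟩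
          intro x hx hxm
          rcases Finset.mem_insert.mp hx with rfl | hx
          · exact h
          · exact hmb x hx hxm
      · refine ⟨a, Finset.mem_insert_self _ _, ?_⟩
        intro x hx hxa
        rcases Finset.mem_insert.mp hx with rfl | hx
        · exact absurd rfl hxa
        · exact absurd ⟨x, hx⟩ hs
  have huniv : (Finset.univ : Finset V).Nonempty := by
    rw [Finset.univ_nonempty_iff]
    have : 0 < Nat.card V := by omega
    exact Nat.card_pos_iff.mp this |>.1
  obtain ⟨t, _, htb⟩ := hmax Finset.univ huniv
  have herase : (Finset.univ.erase t : Finset V).Nonempty := by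
    rw [← Finset.card_pos, Finset.card_erase_of_mem (Finset.mem_univ t)]
    have : (Finset.univ : Finset V).card = Nat.card V := by
      rw [Nat.card_eq_fintype_card, Finset.card_univ]
    omega
  obtain ⟨s, hs, hsb⟩ := hmax _ herase
  have hst : s ≠ t := (Finset.mem_erase.mp hs).1
  have hts : E t s := htb s (Finset.mem_univ s) hst
  have hunb : ¬ ∃ c, E t c ∧ E c s := by
    rintro ⟨c, htc, hcs⟩
    have hct : c ≠ t := fun h => hsimple t c htc h.symm
    have hcse : c ∈ Finset.univ.erase t := Finset.mem_erase.mpr ⟨hct, Finset.mem_univ c⟩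
    have hcsne : c ≠ s := fun h => hsimple c s hcs h
    exact horiented c s hcs (hsb c hcse hcsne)
  refine ⟨⟨t, s, hts, hunb⟩, fun h => hunb (h t s hts)⟩
end

section
/- Let G = (V,E) be a simple oriented graph on a finite vertex type, and for each edge e ∈ E let α(e) denote the number of 3-cliques containing e, i.e. the number of unordered 3-element subsets of V containing both endpoints of e whose elements pairwise span edges of E. If G is an FBD-graph, then the sum of α(e) over all edges e ∈ E is at least 3 times the number of edges of G; equivalently, the number of 3-cliques of G is at least the number of edges of G. -/
/-- `a`, `b`, `c` form a 3-clique: each of the three pairs among them spans an edge of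
`E` in some direction. -/
def Clique3 {V : Type*} (E : V → V → Prop) (a b c : V) : Prop :=
  (E a b ∨ E b a) ∧ (E b c ∨ E c b) ∧ (E a c ∨ E c a)

/-- Key uniqueness lemma: in a 3-set supporting a "transitive triangle" pattern,
the source and sink are determined by the set. -/
lemma fbd_key {V : Type*} {E : V → V → Prop}
    (hne : ∀ i j, E i j → i ≠ j) (hasym : ∀ i j, E i j → ¬ E j i)
    {a b c a' b' c' : V}
    (h1 : E a b) (h2 : E a c) (h3 : E c b)
    (h1' : E a' b') (h2' : E a' c') (h3' : E c' b')
    (hs : ({a, b, c} : Set V) = {a', b', c'}) : a = a' ∧ b = b' := by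
  have ha' : a' ∈ ({a, b, c} : Set V) := by rw [hs]; simp
  have hb' : b' ∈ ({a, b, c} : Set V) := by rw [hs]; simp
  have hc' : c' ∈ ({a, b, c} : Set V) := by rw [hs]; simp
  simp only [Set.mem_insert_iff, Set.mem_singleton_iff] at ha' hb' hc'
  have haa : a = a' := by
    rcases ha' with rfl | rfl | rfl
    · rfl
    · -- a' = b : edges out of b within {a,b,c} lead nowhere
      rcases hb' with rfl | rfl | rfl
      · exact absurd h1' (hasym _ _ h1)
      · exact absurd rfl (hne _ _ h1')
      · exact absurd h1' (hasym _ _ h3)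
    · -- a' = c
      rcases hb' with rfl | rfl | rfl
      · exact absurd h1' (hasym _ _ h2)
      · rcases hc' with rfl | rfl | rfl
        · exact absurd h2' (hasym _ _ h2)
        · exact absurd rfl (hne _ _ h3')
        · exact absurd rfl (hne _ _ h2')
      · exact absurd rfl (hne _ _ h1')
  subst haa
  refine ⟨rfl, ?_⟩
  rcases hb' with rfl | rfl | rfl
  · exact absurd rfl (hne _ _ h1')
  · rfl
  · -- b' = c
    rcases hc' with rfl | rfl | rfl
    · exact absurd rfl (hne _ _ h2')
    · exact absurd h3' (hasym _ _ h3)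
    · exact absurd rfl (hne _ _ h3')

/-- A 3-clique on distinct vertices contributes at least 3 ordered edges with both
endpoints in the clique. -/
lemma tri_three_le {V : Type*} [DecidableEq V] {E : V → V → Prop}
    {x y z : V} (hxy : x ≠ y) (hxz : x ≠ z) (hyz : y ≠ z) (hcl : Clique3 E x y z)
    (F : Finset (V × V))
    (hF : ∀ p : V × V, E p.1 p.2 → p.1 ∈ ({x, y, z} : Set V) → p.2 ∈ ({x, y, z} : Set V) →
      p ∈ F) :
    3 ≤ F.card := by
  obtain ⟨h1, h2, h3⟩ := hcl
  obtain ⟨a1, b1, hE1, hs1⟩ : ∃ a b, E a b ∧ ({a, b} : Set V) = {x, y} :=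
    h1.elim (fun h => ⟨x, y, h, rfl⟩) (fun h => ⟨y, x, h, Set.pair_comm y x⟩)
  obtain ⟨a2, b2, hE2, hs2⟩ : ∃ a b, E a b ∧ ({a, b} : Set V) = {y, z} :=
    h2.elim (fun h => ⟨y, z, h, rfl⟩) (fun h => ⟨z, y, h, Set.pair_comm z y⟩)
  obtain ⟨a3, b3, hE3, hs3⟩ : ∃ a b, E a b ∧ ({a, b} : Set V) = {x, z} :=
    h3.elim (fun h => ⟨x, z, h, rfl⟩) (fun h => ⟨z, x, h, Set.pair_comm z x⟩)
  have hne12 : ((a1, b1) : V × V) ≠ (a2, b2) := by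
    rintro h
    rw [Prod.mk.injEq] at h
    rw [h.1, h.2, hs2] at hs1
    have : x ∈ ({y, z} : Set V) := by rw [hs1]; simp
    simp only [Set.mem_insert_iff, Set.mem_singleton_iff] at this
    tauto
  have hne13 : ((a1, b1) : V × V) ≠ (a3, b3) := by
    rintro h
    rw [Prod.mk.injEq] at h
    rw [h.1, h.2, hs3] at hs1
    have : z ∈ ({x, y} : Set V) := by rw [← hs1]; simp
    simp only [Set.mem_insert_iff, Set.mem_singleton_iff] at this
    exact this.elim (fun h => hxz h.symm) (fun h => hyz h.symm)
  have hne23 : ((a2, b2) : V × V) ≠ (a3, b3) := by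
    rintro h
    rw [Prod.mk.injEq] at h
    rw [h.1, h.2, hs3] at hs2
    have : x ∈ ({y, z} : Set V) := by rw [← hs2]; simp
    simp only [Set.mem_insert_iff, Set.mem_singleton_iff] at this
    tauto
  have hcard : ({((a1, b1) : V × V), (a2, b2), (a3, b3)} : Finset (V × V)).card = 3 := by
    rw [Finset.card_insert_of_notMem (by simp [hne12, hne13]),
      Finset.card_insert_of_notMem (by simp [hne23]), Finset.card_singleton]
  have sub1 : ({x, y} : Set V) ⊆ {x, y, z} := by
    intro t ht; simp only [Set.mem_insert_iff, Set.mem_singleton_iff] at ht ⊢; tauto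
  have sub2 : ({y, z} : Set V) ⊆ {x, y, z} := by
    intro t ht; simp only [Set.mem_insert_iff, Set.mem_singleton_iff] at ht ⊢; tauto
  have sub3 : ({x, z} : Set V) ⊆ {x, y, z} := by
    intro t ht; simp only [Set.mem_insert_iff, Set.mem_singleton_iff] at ht ⊢; tauto
  have hsub : ({((a1, b1) : V × V), (a2, b2), (a3, b3)} : Finset (V × V)) ⊆ F := by
    intro p hp
    simp only [Finset.mem_insert, Finset.mem_singleton] at hp
    rcases hp with rfl | rfl | rfl
    · exact hF _ hE1 (sub1 (hs1 ▸ (by simp : a1 ∈ ({a1, b1} : Set V))))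
        (sub1 (hs1 ▸ (by simp : b1 ∈ ({a1, b1} : Set V))))
    · exact hF _ hE2 (sub2 (hs2 ▸ (by simp : a2 ∈ ({a2, b2} : Set V))))
        (sub2 (hs2 ▸ (by simp : b2 ∈ ({a2, b2} : Set V))))
    · exact hF _ hE3 (sub3 (hs3 ▸ (by simp : a3 ∈ ({a3, b3} : Set V))))
        (sub3 (hs3 ▸ (by simp : b3 ∈ ({a3, b3} : Set V))))
  calc 3 = ({((a1, b1) : V × V), (a2, b2), (a3, b3)} : Finset (V × V)).card := hcard.symm
    _ ≤ _ := Finset.card_le_card hsub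

/-- In an FBD-graph, the sum over all edges `e` of the number `α(e)` of
3-cliques containing `e` (unordered 3-element subsets of `V` containing both endpoints
of `e` whose elements pairwise span edges) is at least 3 times the number of edges;
equivalently, the number of 3-cliques is at least the number of edges. -/
theorem stmt12 {V : Type*} [Fintype V] (E : V → V → Prop) [DecidableRel E]
    (hFBD : Nonempty V ∧
      (∀ i j, E i j → i ≠ j) ∧
      (∀ i j, E i j → ¬ E j i) ∧
      (∀ a b c, ¬ (E a b ∧ E b c ∧ E c a)) ∧
      (∀ a b, E a b → ∃ c, E a c ∧ E c b)) :
    3 * (Finset.univ.filter (fun p : V × V => E p.1 p.2)).card ≤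
      (∑ e ∈ Finset.univ.filter (fun p : V × V => E p.1 p.2),
        Nat.card {s : Set V // s.ncard = 3 ∧ e.1 ∈ s ∧ e.2 ∈ s ∧
          ∃ x y z, s = ({x, y, z} : Set V) ∧ Clique3 E x y z}) ∧
    (Finset.univ.filter (fun p : V × V => E p.1 p.2)).card ≤
      Nat.card {s : Set V // s.ncard = 3 ∧
        ∃ x y z, s = ({x, y, z} : Set V) ∧ Clique3 E x y z} := by
  classical
  obtain ⟨-, hne, hasym, -, hblk⟩ := hFBD
  -- Part 2: injection from edges to 3-cliques
  have hTri2 :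
      (Finset.univ.filter (fun p : V × V => E p.1 p.2)).card ≤
        Nat.card {s : Set V // s.ncard = 3 ∧
          ∃ x y z, s = ({x, y, z} : Set V) ∧ Clique3 E x y z} := by
    have h1 : (Finset.univ.filter (fun p : V × V => E p.1 p.2)).card
        = Nat.card {p : V × V // E p.1 p.2} := by
      rw [Nat.card_eq_fintype_card, Fintype.card_subtype]
    rw [h1]
    have hc1 : ∀ q : {p : V × V // E p.1 p.2}, E q.1.1 (hblk q.1.1 q.1.2 q.2).choose :=
      fun q => (hblk q.1.1 q.1.2 q.2).choose_spec.1
    have hc2 : ∀ q : {p : V × V // E p.1 p.2}, E (hblk q.1.1 q.1.2 q.2).choose q.1.2 :=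
      fun q => (hblk q.1.1 q.1.2 q.2).choose_spec.2
    let f : {p : V × V // E p.1 p.2} → {s : Set V // s.ncard = 3 ∧
        ∃ x y z, s = ({x, y, z} : Set V) ∧ Clique3 E x y z} := fun q =>
      ⟨{q.1.1, q.1.2, (hblk q.1.1 q.1.2 q.2).choose},
        ⟨Set.ncard_eq_three.mpr ⟨q.1.1, q.1.2, (hblk q.1.1 q.1.2 q.2).choose, hne _ _ q.2,
            hne _ _ (hc1 q), (hne _ _ (hc2 q)).symm, rfl⟩,
          q.1.1, q.1.2, (hblk q.1.1 q.1.2 q.2).choose, rfl,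
          Or.inl q.2, Or.inr (hc2 q), Or.inl (hc1 q)⟩⟩
    apply Nat.card_le_card_of_injective f
    intro q q' hqq
    have hs : ({q.1.1, q.1.2, (hblk q.1.1 q.1.2 q.2).choose} : Set V)
        = {q'.1.1, q'.1.2, (hblk q'.1.1 q'.1.2 q'.2).choose} :=
      congrArg Subtype.val hqq
    obtain ⟨ha, hb⟩ := fbd_key hne hasym q.2 (hc1 q) (hc2 q) q'.2 (hc1 q') (hc2 q') hs
    exact Subtype.ext (Prod.ext ha hb)
  refine ⟨?_, hTri2⟩
  -- Part 1
  have hT : Nat.card {s : Set V // s.ncard = 3 ∧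
        ∃ x y z, s = ({x, y, z} : Set V) ∧ Clique3 E x y z}
      = (Finset.univ.filter (fun s : Set V => s.ncard = 3 ∧
          ∃ x y z, s = ({x, y, z} : Set V) ∧ Clique3 E x y z)).card := by
    rw [Nat.card_eq_fintype_card, Fintype.card_subtype]
  have hα : ∀ e ∈ Finset.univ.filter (fun p : V × V => E p.1 p.2),
      Nat.card {s : Set V // s.ncard = 3 ∧ e.1 ∈ s ∧ e.2 ∈ s ∧
          ∃ x y z, s = ({x, y, z} : Set V) ∧ Clique3 E x y z}
        = ((Finset.univ.filter (fun s : Set V => s.ncard = 3 ∧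
            ∃ x y z, s = ({x, y, z} : Set V) ∧ Clique3 E x y z)).filter
            (fun s => e.1 ∈ s ∧ e.2 ∈ s)).card := by
    intro e _
    rw [Nat.card_eq_fintype_card, Fintype.card_subtype, Finset.filter_filter]
    congr 1
    ext s
    simp only [Finset.mem_filter, Finset.mem_univ, true_and]
    tauto
  rw [Finset.sum_congr rfl hα]
  have hdc : ∑ e ∈ Finset.univ.filter (fun p : V × V => E p.1 p.2),
        ((Finset.univ.filter (fun s : Set V => s.ncard = 3 ∧
            ∃ x y z, s = ({x, y, z} : Set V) ∧ Clique3 E x y z)).filter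
            (fun s => e.1 ∈ s ∧ e.2 ∈ s)).card
      = ∑ s ∈ Finset.univ.filter (fun s : Set V => s.ncard = 3 ∧
            ∃ x y z, s = ({x, y, z} : Set V) ∧ Clique3 E x y z),
        ((Finset.univ.filter (fun p : V × V => E p.1 p.2)).filter
            (fun e : V × V => e.1 ∈ s ∧ e.2 ∈ s)).card := by
    simpa [Finset.bipartiteAbove, Finset.bipartiteBelow] using
      Finset.sum_card_bipartiteAbove_eq_sum_card_bipartiteBelow
        (r := fun (e : V × V) (s : Set V) => e.1 ∈ s ∧ e.2 ∈ s)
        (s := Finset.univ.filter (fun p : V × V => E p.1 p.2))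
        (t := Finset.univ.filter (fun s : Set V => s.ncard = 3 ∧
            ∃ x y z, s = ({x, y, z} : Set V) ∧ Clique3 E x y z))
  rw [hdc]
  have h2le : ∀ u v : V, ({u, v} : Set V).ncard ≤ 2 := fun u v =>
    le_trans (Set.ncard_insert_le u {v}) (by simp [Set.ncard_singleton])
  have hper : ∀ s ∈ Finset.univ.filter (fun s : Set V => s.ncard = 3 ∧
        ∃ x y z, s = ({x, y, z} : Set V) ∧ Clique3 E x y z),
      3 ≤ ((Finset.univ.filter (fun p : V × V => E p.1 p.2)).filter
          (fun e : V × V => e.1 ∈ s ∧ e.2 ∈ s)).card := by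
    intro s hsmem
    simp only [Finset.mem_filter, Finset.mem_univ, true_and] at hsmem
    obtain ⟨hncard, x, y, z, hxyz, hcl⟩ := hsmem
    have hxy : x ≠ y := by
      rintro rfl
      rw [Set.insert_idem] at hxyz
      have := h2le x z
      rw [← hxyz, hncard] at this
      omega
    have hyz : y ≠ z := by
      rintro rfl
      rw [Set.pair_eq_singleton] at hxyz
      have := h2le x y
      rw [← hxyz, hncard] at this
      omega
    have hxz : x ≠ z := by
      rintro rfl
      have hrw : ({x, y, x} : Set V) = {x, y} := by
        ext t; simp only [Set.mem_insert_iff, Set.mem_singleton_iff]; tauto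
      rw [hrw] at hxyz
      have := h2le x y
      rw [← hxyz, hncard] at this
      omega
    subst hxyz
    refine tri_three_le hxy hxz hyz hcl _ (fun p hp h1 h2 => ?_)
    simp only [Finset.mem_filter, Finset.mem_univ, true_and]
    exact ⟨hp, h1, h2⟩
  calc 3 * (Finset.univ.filter (fun p : V × V => E p.1 p.2)).card
      ≤ 3 * (Finset.univ.filter (fun s : Set V => s.ncard = 3 ∧
          ∃ x y z, s = ({x, y, z} : Set V) ∧ Clique3 E x y z)).card := by
        rw [hT] at hTri2; exact Nat.mul_le_mul_left 3 hTri2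
    _ = (Finset.univ.filter (fun s : Set V => s.ncard = 3 ∧
          ∃ x y z, s = ({x, y, z} : Set V) ∧ Clique3 E x y z)).card • 3 := by
        rw [smul_eq_mul, mul_comm]
    _ ≤ _ := Finset.card_nsmul_le_sum _ _ _ hper
end

section
/- There exists a simple oriented graph G on a finite vertex type which contains no directed 3-cycles, has at least one edge, and is such that for every edge (a,b) of G, the graph obtained from G by flipping (a,b) (replacing (a,b) with (b,a)) contains at least one directed 3-cycle. -/
/-- There exists a simple oriented graph on a finite vertex type with no
directed 3-cycles and at least one edge such that for every edge `(a,b)`, the graph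
obtained by flipping `(a,b)` contains at least one directed 3-cycle. -/
theorem stmt17 :
    ∃ (V : Type) (_ : Fintype V) (E : V → V → Prop),
      (∀ i j, E i j → i ≠ j) ∧
      (∀ i j, E i j → ¬ E j i) ∧
      (∀ a b c, ¬ (E a b ∧ E b c ∧ E c a)) ∧
      (∃ a b, E a b) ∧
      ∀ a b, E a b →
        ∃ x y z, Flip E a b x y ∧ Flip E a b y z ∧ Flip E a b z x := by
  refine ⟨ZMod 15, inferInstance,
    fun i j => j - i = 1 ∨ j - i = 2 ∨ j - i = 4 ∨ j - i = 8,
    ?_, ?_, ?_, ⟨0, 1, by decide⟩, ?_⟩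
  · decide
  · decide
  · decide
  · intro a b hab
    refine ⟨b, a, a + 8 * (b - a), Or.inl ⟨rfl, rfl⟩, ?_, ?_⟩ <;>
      · simp only [Flip]
        revert a b hab
        decide
end
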